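/- Let T > 0, n ∈ ℕ, p ∈ [1,∞), σ > 0, and let D ⊆ L^p((0,T);ℝⁿ) satisfy: (D1) every u ∈ D has a representative v with v(t) ∈ {0,1}ⁿ for all t ∈ (0,T) and Σ_{j=1}^n Var(v_j;(0,T)) ≤ σ (pointwise total variation), and (D2) D is closed in L^p((0,T);ℝⁿ). Let M ∈ ℕ, let I₁,…,I_M be nonempty bounded open subintervals of (0,T), let j₁,…,j_M ∈ {1,…,n}, and define the linear map Π : L^p((0,T);ℝⁿ) → ℝ^M by Π(u)_i = (1/λ(I_i)) ∫_{I_i} u_{j_i} dλ, where λ is Lebesgue measure. Then the set C_{D,Π} := conv{Π(u) : u ∈ D} is closed in ℝ^M. -/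

import Mathlib

open MeasureTheory Set Filter
open scoped ENNReal

open scoped Topology NNReal

lemma aux_isCompact_convexHull {E : Type*} [NormedAddCommGroup E] [NormedSpace ℝ E]
    [FiniteDimensional ℝ E] {s : Set E} (hs : IsCompact s) :
    IsCompact (convexHull ℝ s) := by
  classical
  set d := Module.finrank ℝ E + 1 with hd
  let f : (Fin d → ℝ) × (Fin d → E) → E := fun wx => ∑ i, wx.1 i • wx.2 i
  have hf : Continuous f := by
    apply continuous_finset_sum
    intro i _
    exact ((continuous_apply i).comp continuous_fst).smul
      ((continuous_apply i).comp continuous_snd)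
  have heq : convexHull ℝ s = f '' ((stdSimplex ℝ (Fin d)) ×ˢ (Set.univ.pi fun _ => s)) := by
    apply Subset.antisymm
    · intro x hx
      obtain ⟨ι, hι, z, w, hzs, hai, hw0, hw1, hwz⟩ :=
        eq_pos_convex_span_of_mem_convexHull hx
      have hcard : Fintype.card ι ≤ d := by
        refine hai.card_le_finrank_succ.trans ?_
        exact Nat.add_le_add_right (Submodule.finrank_le _) 1
      have hne : Nonempty ι := by
        by_contra h
        rw [not_nonempty_iff] at h
        simp [Finset.univ_eq_empty] at hw1
      obtain ⟨i₀⟩ := hne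
      obtain ⟨e⟩ : Nonempty (ι ↪ Fin d) := Function.Embedding.nonempty_iff_card_le.2 (by simpa using hcard)
      let w' : Fin d → ℝ := fun l => if h : ∃ i, e i = l then w h.choose else 0
      let z' : Fin d → E := fun l => if h : ∃ i, e i = l then z h.choose else z i₀
      have hfilter : (Finset.univ.filter fun l => ∃ i, e i = l) = Finset.univ.image e := by
        ext l; simp [eq_comm]
      have hwe : ∀ i : ι, w' (e i) = w i := by
        intro i
        have h : ∃ i', e i' = e i := ⟨i, rfl⟩
        simp only [w', dif_pos h]
        rw [e.injective h.choose_spec]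
      have hze : ∀ i : ι, z' (e i) = z i := by
        intro i
        have h : ∃ i', e i' = e i := ⟨i, rfl⟩
        simp only [z', dif_pos h]
        rw [e.injective h.choose_spec]
      have hsum : ∀ g : Fin d → ℝ → E → E,
          True := fun _ => trivial
      refine ⟨(w', z'), ⟨?_, ?_⟩, ?_⟩
      · constructor
        · intro l
          by_cases h : ∃ i, e i = l
          · simp only [w', dif_pos h]; exact (hw0 _).le
          · simp [w', dif_neg h]
        · rw [← Finset.sum_filter_ne_zero]
          have hsub2 : (Finset.univ.filter fun l => w' l ≠ 0) ⊆ Finset.univ.image e := by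
            intro l hl
            simp only [Finset.mem_filter] at hl
            rw [← hfilter]
            simp only [Finset.mem_filter, Finset.mem_univ, true_and]
            by_contra h
            exact hl.2 (by simp [w', dif_neg h])
          rw [Finset.sum_subset hsub2 (by
            intro l _ hl
            simp only [Finset.mem_filter, Finset.mem_univ, true_and, not_not] at hl
            exact hl)]
          rw [Finset.sum_image (fun i _ i' _ h => e.injective h)]
          simp only [hwe]
          exact hw1
      · intro l _
        by_cases h : ∃ i, e i = l
        · simp only [z', dif_pos h]; exact hzs ⟨_, rfl⟩
        · simp only [z', dif_neg h]; exact hzs ⟨_, rfl⟩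
      · show ∑ l, w' l • z' l = x
        rw [← hwz]
        rw [← Finset.sum_filter_of_ne (p := fun l => w' l ≠ 0)
          (by intro l _ h hc; exact h (by rw [hc, zero_smul]))]
        have hsub2 : (Finset.univ.filter fun l => w' l ≠ 0) ⊆ Finset.univ.image e := by
          intro l hl
          simp only [Finset.mem_filter] at hl
          rw [← hfilter]
          simp only [Finset.mem_filter, Finset.mem_univ, true_and]
          by_contra h
          exact hl.2 (by simp [w', dif_neg h])
        rw [Finset.sum_subset hsub2 (by
          intro l _ hl
          simp only [Finset.mem_filter, Finset.mem_univ, true_and, not_not] at hl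
          rw [hl, zero_smul])]
        rw [Finset.sum_image (fun i _ i' _ h => e.injective h)]
        simp only [hwe, hze]
    · rintro x ⟨⟨w, z⟩, ⟨hw, hz⟩, rfl⟩
      exact (convex_convexHull ℝ s).sum_mem (fun i _ => hw.1 i) hw.2
        (fun i _ => subset_convexHull ℝ s (hz i (mem_univ i)))
  rw [heq]
  exact ((isCompact_stdSimplex _ _).prod (isCompact_univ_pi fun _ => hs)).image hf

lemma aux_chain_mono {u : ℕ → ℝ} {k : ℕ} (h : ∀ i < k, u i < u (i + 1)) :
    ∀ i j, i ≤ j → j ≤ k → u i ≤ u j := by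
  intro i j hij hjk
  induction j with
  | zero =>
    have : i = 0 := by omega
    simp [this]
  | succ m ih =>
    rcases Nat.lt_or_ge i (m + 1) with h' | h'
    · exact (ih (by omega) (by omega)).trans (h m (by omega)).le
    · have : i = m + 1 := by omega
      simp [this]

lemma aux_two_val {T : ℝ} {v : ℝ → ℝ}
    (h01 : ∀ t ∈ Ioo (0:ℝ) T, v t = 0 ∨ v t = 1) :
    ∀ {x y : ℝ}, x ∈ Ioo (0:ℝ) T → y ∈ Ioo (0:ℝ) T → v x ≠ v y →
      ∀ {z : ℝ}, z ∈ Ioo (0:ℝ) T → v z ≠ v y → v z = v x := by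
  intro x y hx hy hxy z hz hzy
  rcases h01 x hx with h1 | h1 <;> rcases h01 y hy with h2 | h2 <;>
    rcases h01 z hz with h3 | h3 <;> simp_all

lemma aux_lemmaA {T : ℝ} (hT : 0 < T) {σ : ℝ} (hσ : 0 < σ) (v : ℝ → ℝ)
    (h01 : ∀ t ∈ Ioo (0:ℝ) T, v t = 0 ∨ v t = 1)
    (hvar : eVariationOn v (Ioo (0:ℝ) T) ≤ ENNReal.ofReal σ) :
    ∃ c d : Fin (⌊σ⌋₊ + 1) → ℝ,
      (∀ l, c l ∈ Icc (0:ℝ) T ∧ d l ∈ Icc (0:ℝ) T) ∧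
      ∃ B : Set ℝ, B.Countable ∧ ∀ t ∈ Ioo (0:ℝ) T, t ∉ B →
        v t = Set.indicator (⋃ l, Ioo (c l) (d l)) (fun _ => (1:ℝ)) t := by
  classical
  set P : ℕ → Prop := fun k => ∃ u : ℕ → ℝ,
    (∀ i ≤ k, u i ∈ Ioo (0:ℝ) T) ∧ (∀ i < k, u i < u (i + 1)) ∧
    (∀ i < k, v (u (i + 1)) ≠ v (u i)) with hP
  have hbound : ∀ k, P k → k ≤ ⌊σ⌋₊ := by
    intro k ⟨u, hmem, hlt, hne⟩
    have hmono2 := aux_chain_mono hlt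
    have hm : Monotone fun i => u (min i k) := by
      intro i j hij
      exact hmono2 _ _ (by omega) (by omega)
    have hus : ∀ i, u (min i k) ∈ Ioo (0:ℝ) T := fun i => hmem _ (by omega)
    have hsum := eVariationOn.sum_le (f := v) (n := k) hm hus
    have hone : ∀ i ∈ Finset.range k,
        edist (v (u (min (i + 1) k))) (v (u (min i k))) = 1 := by
      intro i hi
      rw [Finset.mem_range] at hi
      rw [Nat.min_eq_left (by omega), Nat.min_eq_left (by omega)]
      have hne' := hne i hi
      rw [edist_dist, Real.dist_eq]
      rcases h01 _ (hmem (i + 1) (by omega)) with ha | ha <;>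
        rcases h01 _ (hmem i (by omega)) with hb | hb <;>
        rw [ha, hb] at hne' ⊢ <;> simp_all <;> norm_num
    rw [Finset.sum_congr rfl hone] at hsum
    simp only [Finset.sum_const, Finset.card_range, nsmul_eq_mul, mul_one] at hsum
    have hk : (k : ℝ≥0∞) ≤ ENNReal.ofReal σ := hsum.trans hvar
    rw [← ENNReal.ofReal_natCast k, ENNReal.ofReal_le_ofReal_iff hσ.le] at hk
    exact Nat.le_floor hk
  have hP0 : P 0 := by
    refine ⟨fun _ => T / 2, fun i _ => ⟨by positivity, by linarith⟩, by omega, by omega⟩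
  have hbdd : BddAbove {k | P k} := ⟨⌊σ⌋₊, fun k hk => hbound k hk⟩
  set K := sSup {k | P k} with hK
  have hKmem : P K := Nat.sSup_mem ⟨0, hP0⟩ hbdd
  have hKle : K ≤ ⌊σ⌋₊ := hbound _ hKmem
  have hmax : ∀ k, P k → k ≤ K := fun k hk => le_csSup hbdd hk
  obtain ⟨w, hwmem, hwlt, hwne⟩ := hKmem
  -- claim c1
  have hc1 : ∀ t ∈ Ioo (0:ℝ) T, t < w 0 → v t = v (w 0) := by
    intro t ht hlt0
    by_contra hne0
    have hPK1 : P (K + 1) := by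
      refine ⟨fun m => if m = 0 then t else w (m - 1), ?_, ?_, ?_⟩
      · intro i hi
        by_cases h : i = 0
        · simpa [h] using ht
        · simp only [if_neg h]
          exact hwmem _ (by omega)
      · intro i hi
        by_cases h : i = 0
        · subst h; simpa using hlt0
        · simp only [if_neg h, if_neg (by omega : ¬ i + 1 = 0)]
          have : i - 1 < K := by omega
          have := hwlt _ this
          have heq : i - 1 + 1 = i + 1 - 1 := by omega
          rwa [heq] at this
      · intro i hi
        by_cases h : i = 0
        · subst h
          simpa using fun hc => hne0 hc.symm
        · simp only [if_neg h, if_neg (by omega : ¬ i + 1 = 0)]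
          have : i - 1 < K := by omega
          have := hwne _ this
          have heq : i - 1 + 1 = i + 1 - 1 := by omega
          rwa [heq] at this
    have := hmax _ hPK1; omega
  -- claim c2
  have hc2 : ∀ t ∈ Ioo (0:ℝ) T, w K < t → v t = v (w K) := by
    intro t ht hltK
    by_contra hne0
    have hPK1 : P (K + 1) := by
      refine ⟨fun m => if m ≤ K then w m else t, ?_, ?_, ?_⟩
      · intro i hi
        by_cases h : i ≤ K
        · simp only [if_pos h]; exact hwmem _ h
        · simpa [if_neg h] using ht
      · intro i hi
        by_cases h : i + 1 ≤ K
        · simp only [if_pos h, if_pos (by omega : i ≤ K)]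
          exact hwlt _ (by omega)
        · have hiK : i = K := by omega
          subst hiK
          simp only [if_pos (le_refl K), if_neg (by omega : ¬ K + 1 ≤ K)]
          exact hltK
      · intro i hi
        by_cases h : i + 1 ≤ K
        · simp only [if_pos h, if_pos (by omega : i ≤ K)]
          exact hwne _ (by omega)
        · have hiK : i = K := by omega
          subst hiK
          simp only [if_pos (le_refl K), if_neg (by omega : ¬ K + 1 ≤ K)]
          exact fun hc => hne0 hc
    have := hmax _ hPK1; omega
  -- claim c3
  have hc3 : ∀ i < K, ∀ t t' : ℝ, w i < t → t < t' → t' < w (i + 1) →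
      v t ≠ v (w i) → v t' = v (w i) → False := by
    intro i hiK t t' h1 h2 h3 h4 h5
    have hwi := hwmem i (by omega)
    have hwi1 := hwmem (i + 1) (by omega)
    have ht : t ∈ Ioo (0:ℝ) T := ⟨hwi.1.trans h1, (h2.trans (h3.trans hwi1.2))⟩
    have ht' : t' ∈ Ioo (0:ℝ) T := ⟨ht.1.trans h2, h3.trans hwi1.2⟩
    have hPK2 : P (K + 2) := by
      refine ⟨fun m => if m ≤ i then w m else if m = i + 1 then t
        else if m = i + 2 then t' else w (m - 2), ?_, ?_, ?_⟩
      · intro m hm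
        by_cases ha : m ≤ i
        · simp only [if_pos ha]; exact hwmem _ (by omega)
        · by_cases hb : m = i + 1
          · simpa [if_neg ha, hb] using ht
          · by_cases hc : m = i + 2
            · simpa [if_neg ha, if_neg hb, hc] using ht'
            · simp only [if_neg ha, if_neg hb, if_neg hc]
              exact hwmem _ (by omega)
      · intro m hm
        rcases Nat.lt_or_ge m i with hlt' | hge
        · simp only [if_pos hlt'.le, if_pos (by omega : m + 1 ≤ i)]
          exact hwlt _ (by omega)
        · by_cases ha : m = i
          · subst ha
            simp only [if_pos (le_refl m), if_neg (by omega : ¬ m + 1 ≤ m),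
              if_pos rfl]
            exact h1
          · by_cases hb : m = i + 1
            · subst hb
              simp only [if_neg (by omega : ¬ i + 1 ≤ i), if_pos rfl,
                if_neg (by omega : ¬ i + 1 + 1 ≤ i), if_neg (by omega : ¬ i + 1 + 1 = i + 1),
                if_pos (by omega : i + 1 + 1 = i + 2), if_true]
              exact h2
            · by_cases hc : m = i + 2
              · subst hc
                simp only [if_neg (by omega : ¬ i + 2 ≤ i), if_neg (by omega : ¬ i + 2 = i + 1),
                  if_pos rfl, if_neg (by omega : ¬ i + 2 + 1 ≤ i),
                  if_neg (by omega : ¬ i + 2 + 1 = i + 1), if_neg (by omega : ¬ i + 2 + 1 = i + 2), if_true]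
                have : i + 2 + 1 - 2 = i + 1 := by omega
                rw [this]
                exact h3
              · simp only [if_neg (by omega : ¬ m ≤ i), if_neg hb, if_neg hc,
                  if_neg (by omega : ¬ m + 1 ≤ i), if_neg (by omega : ¬ m + 1 = i + 1),
                  if_neg (by omega : ¬ m + 1 = i + 2)]
                have : m + 1 - 2 = (m - 2) + 1 := by omega
                rw [this]
                exact hwlt _ (by omega)
      · intro m hm
        rcases Nat.lt_or_ge m i with hlt' | hge
        · simp only [if_pos hlt'.le, if_pos (by omega : m + 1 ≤ i)]
          exact hwne _ (by omega)
        · by_cases ha : m = i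
          · subst ha
            simp only [if_pos (le_refl m), if_neg (by omega : ¬ m + 1 ≤ m), if_pos rfl]
            exact h4
          · by_cases hb : m = i + 1
            · subst hb
              simp only [if_neg (by omega : ¬ i + 1 ≤ i), if_pos rfl,
                if_neg (by omega : ¬ i + 1 + 1 ≤ i), if_neg (by omega : ¬ i + 1 + 1 = i + 1),
                if_pos (by omega : i + 1 + 1 = i + 2), if_true]
              rw [h5]
              exact fun hc => h4 hc.symm
            · by_cases hc : m = i + 2
              · subst hc
                simp only [if_neg (by omega : ¬ i + 2 ≤ i), if_neg (by omega : ¬ i + 2 = i + 1),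
                  if_pos rfl, if_neg (by omega : ¬ i + 2 + 1 ≤ i),
                  if_neg (by omega : ¬ i + 2 + 1 = i + 1), if_neg (by omega : ¬ i + 2 + 1 = i + 2), if_true]
                have heq2 : i + 2 + 1 - 2 = i + 1 := by omega
                rw [heq2, h5]
                exact hwne _ hiK
              · simp only [if_neg (by omega : ¬ m ≤ i), if_neg hb, if_neg hc,
                  if_neg (by omega : ¬ m + 1 ≤ i), if_neg (by omega : ¬ m + 1 = i + 1),
                  if_neg (by omega : ¬ m + 1 = i + 2)]
                have : m + 1 - 2 = (m - 2) + 1 := by omega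
                rw [this]
                exact hwne _ (by omega)
    have := hmax _ hPK2; omega
  -- midpoints
  set S : ℕ → Set ℝ := fun i =>
    {t | w i < t ∧ t < w (i + 1) ∧ v t ≠ v (w i)} ∪ {w (i + 1)} with hS
  have hSne : ∀ i, (S i).Nonempty := fun i => ⟨w (i + 1), Or.inr rfl⟩
  have hSlb : ∀ i < K, ∀ x ∈ S i, w i ≤ x := by
    intro i hi x hx
    rcases hx with hx | hx
    · exact hx.1.le
    · rw [mem_singleton_iff] at hx
      rw [hx]
      exact (hwlt i hi).le
  set m : ℕ → ℝ := fun i => sInf (S i) with hm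
  have hm_ge : ∀ i < K, w i ≤ m i := fun i hi => le_csInf (hSne i) (hSlb i hi)
  have hm_le : ∀ i < K, m i ≤ w (i + 1) := fun i hi =>
    csInf_le ⟨w i, hSlb i hi⟩ (Or.inr rfl)
  have hm3 : ∀ i < K, ∀ t : ℝ, w i < t → t < m i → v t = v (w i) := by
    intro i hi t h1 h2
    by_contra hne'
    have htS : t ∈ S i := Or.inl ⟨h1, h2.trans_le (hm_le i hi), hne'⟩
    exact absurd (csInf_le ⟨w i, hSlb i hi⟩ htS) (by exact not_le.mpr h2)
  have hm4 : ∀ i < K, ∀ t : ℝ, m i < t → t < w (i + 1) → v t ≠ v (w i) := by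
    intro i hi t h1 h2 hveq
    obtain ⟨s, hsS, hst⟩ := exists_lt_of_csInf_lt (hSne i) h1
    rcases hsS with hs | hs
    · exact hc3 i hi s t hs.1 hst h2 hs.2.2 hveq
    · rw [mem_singleton_iff] at hs
      rw [hs] at hst
      exact absurd h2 (not_lt.mpr hst.le)
  -- extended midpoints
  set mm : ℕ → ℝ := fun i => if i = 0 then 0 else if i ≤ K then m (i - 1) else T with hmm
  have hmm0 : mm 0 = 0 := by simp [hmm]
  have hmmtop : ∀ i, K < i → mm i = T := by
    intro i hi
    simp only [hmm, if_neg (by omega : ¬ i = 0), if_neg (by omega : ¬ i ≤ K)]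
  have hmm_le_w : ∀ i ≤ K, mm i ≤ w i := by
    intro i hi
    by_cases h : i = 0
    · subst h; rw [hmm0]; exact (hwmem 0 (by omega)).1.le
    · simp only [hmm, if_neg h, if_pos hi]
      have := hm_le (i - 1) (by omega)
      have heq : i - 1 + 1 = i := by omega
      rwa [heq] at this
  have hw_le_mm : ∀ i ≤ K, w i ≤ mm (i + 1) := by
    intro i hi
    rcases Nat.lt_or_ge i K with h | h
    · simp only [hmm, if_neg (by omega : ¬ i + 1 = 0), if_pos (by omega : i + 1 ≤ K)]
      simpa using hm_ge i h
    · rw [hmmtop (i + 1) (by omega)]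
      exact (hwmem i hi).2.le
  have hmm_mem : ∀ i, mm i ∈ Icc (0:ℝ) T := by
    intro i
    by_cases h : i = 0
    · subst h; rw [hmm0]; exact ⟨le_rfl, hT.le⟩
    · by_cases h2 : i ≤ K
      · simp only [hmm, if_neg h, if_pos h2]
        constructor
        · exact le_trans (hwmem (i - 1) (by omega)).1.le (hm_ge (i - 1) (by omega))
        · refine le_trans (hm_le (i - 1) (by omega)) ?_
          have heq : i - 1 + 1 = i := by omega
          rw [heq]
          exact (hwmem i h2).2.le
      · rw [hmmtop i (by omega)]; exact ⟨hT.le, le_rfl⟩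
  have hmm_succ : ∀ i, mm i ≤ mm (i + 1) := by
    intro i
    rcases le_or_gt i K with h | h
    · exact (hmm_le_w i h).trans (hw_le_mm i h)
    · rw [hmmtop i h, hmmtop (i + 1) (by omega)]
  have hmm_mono : Monotone mm := monotone_nat_of_le_succ hmm_succ
  -- slab lemma
  have hslab : ∀ i ≤ K, ∀ t ∈ Ioo (0:ℝ) T, mm i < t → t < mm (i + 1) → t ≠ w i →
      v t = v (w i) := by
    intro i hi t ht h1 h2 hne'
    rcases lt_trichotomy t (w i) with hlt' | heq' | hgt'
    · by_cases h0 : i = 0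
      · subst h0; exact hc1 t ht hlt'
      · obtain ⟨i', rfl⟩ : ∃ i', i = i' + 1 := ⟨i - 1, by omega⟩
        have hmi : m i' < t := by
          have : mm (i' + 1) = m i' := by
            simp only [hmm, if_neg (by omega : ¬ i' + 1 = 0), if_pos hi]
            congr 1
          rwa [this] at h1
        have hvne := hm4 i' (by omega) t hmi hlt'
        exact aux_two_val h01 (hwmem (i' + 1) hi) (hwmem i' (by omega))
          (hwne i' (by omega)) ht hvne
    · exact absurd heq' hne'
    · rcases Nat.lt_or_ge i K with hiK | hiK
      · have : mm (i + 1) = m i := by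
          simp only [hmm, if_neg (by omega : ¬ i + 1 = 0), if_pos (by omega : i + 1 ≤ K)]
          congr 1
        rw [this] at h2
        exact hm3 i hiK t hgt' h2
      · have : i = K := by omega
        subst this
        exact hc2 t ht hgt'
  -- slot finding
  have hslot : ∀ t ∈ Ioo (0:ℝ) T, (∀ i, t ≠ mm i) →
      ∃ i ≤ K, mm i < t ∧ t < mm (i + 1) := by
    intro t ht htm
    have hex : ∃ jj, t < mm jj := ⟨K + 1, by rw [hmmtop (K + 1) (by omega)]; exact ht.2⟩
    set j0 := Nat.find hex with hj0
    have hspec : t < mm j0 := Nat.find_spec hex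
    have hpos : j0 ≠ 0 := by
      intro h
      rw [h, hmm0] at hspec
      exact absurd hspec (not_lt.mpr ht.1.le)
    have hle : j0 ≤ K + 1 := Nat.find_le (by rw [hmmtop (K + 1) (by omega)]; exact ht.2)
    refine ⟨j0 - 1, by omega, ?_, ?_⟩
    · have hnotlt : ¬ t < mm (j0 - 1) := Nat.find_min hex (by omega)
      have := not_lt.mp hnotlt
      exact lt_of_le_of_ne this (Ne.symm (htm (j0 - 1)))
    · have heq : j0 - 1 + 1 = j0 := by omega
      rw [heq]
      exact hspec
  -- define c, d
  set c : Fin (⌊σ⌋₊ + 1) → ℝ := fun l =>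
    if (l : ℕ) ≤ K ∧ v (w (l : ℕ)) = 1 then mm (l : ℕ) else 0 with hc
  set d : Fin (⌊σ⌋₊ + 1) → ℝ := fun l =>
    if (l : ℕ) ≤ K ∧ v (w (l : ℕ)) = 1 then mm ((l : ℕ) + 1) else 0 with hd
  refine ⟨c, d, ?_, ?_⟩
  · intro l
    constructor
    · simp only [hc]
      split_ifs with h
      · exact hmm_mem _
      · exact ⟨le_rfl, hT.le⟩
    · simp only [hd]
      split_ifs with h
      · exact hmm_mem _
      · exact ⟨le_rfl, hT.le⟩
  · refine ⟨Set.range w ∪ Set.range mm, (countable_range w).union (countable_range mm), ?_⟩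
    intro t ht htB
    have htw : ∀ i, t ≠ w i := fun i h => htB (Or.inl ⟨i, h.symm⟩)
    have htm : ∀ i, t ≠ mm i := fun i h => htB (Or.inr ⟨i, h.symm⟩)
    obtain ⟨i, hiK, h1, h2⟩ := hslot t ht htm
    have hv : v t = v (w i) := hslab i hiK t ht h1 h2 (htw i)
    have hceq : ∀ l : Fin (⌊σ⌋₊ + 1), ((l : ℕ) ≤ K ∧ v (w (l : ℕ)) = 1) →
        c l = mm (l : ℕ) ∧ d l = mm ((l : ℕ) + 1) := by
      intro l hQ
      constructor
      · show (if (l : ℕ) ≤ K ∧ v (w (l : ℕ)) = 1 then mm (l : ℕ) else 0) = mm (l : ℕ)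
        exact if_pos hQ
      · show (if (l : ℕ) ≤ K ∧ v (w (l : ℕ)) = 1 then mm ((l : ℕ) + 1) else 0)
            = mm ((l : ℕ) + 1)
        exact if_pos hQ
    have hceq0 : ∀ l : Fin (⌊σ⌋₊ + 1), ¬ ((l : ℕ) ≤ K ∧ v (w (l : ℕ)) = 1) →
        c l = 0 ∧ d l = 0 := by
      intro l hQ
      constructor
      · show (if (l : ℕ) ≤ K ∧ v (w (l : ℕ)) = 1 then mm (l : ℕ) else 0) = 0
        exact if_neg hQ
      · show (if (l : ℕ) ≤ K ∧ v (w (l : ℕ)) = 1 then mm ((l : ℕ) + 1) else 0) = 0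
        exact if_neg hQ
    by_cases hvi : v (w i) = 1
    · have hmem' : t ∈ ⋃ l, Ioo (c l) (d l) := by
        have hlt : i < ⌊σ⌋₊ + 1 := by omega
        refine mem_iUnion.2 ⟨⟨i, hlt⟩, ?_⟩
        obtain ⟨e1, e2⟩ := hceq ⟨i, hlt⟩ ⟨hiK, hvi⟩
        rw [mem_Ioo, e1, e2]
        exact ⟨h1, h2⟩
      rw [Set.indicator_of_mem hmem']
      rw [hv, hvi]
    · have hnmem : t ∉ ⋃ l, Ioo (c l) (d l) := by
        intro hmem'
        obtain ⟨l, hl⟩ := mem_iUnion.1 hmem'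
        by_cases hQ : (l : ℕ) ≤ K ∧ v (w (l : ℕ)) = 1
        · obtain ⟨e1, e2⟩ := hceq l hQ
          rw [mem_Ioo, e1, e2] at hl
          have hli : (l : ℕ) = i := by
            by_contra hne'
            rcases Nat.lt_or_ge (l : ℕ) i with hlt' | hge'
            · have : mm ((l : ℕ) + 1) ≤ mm i := hmm_mono (by omega)
              linarith [hl.2, this, h1]
            · have : mm (i + 1) ≤ mm (l : ℕ) := hmm_mono (by omega)
              linarith [hl.1, this, h2]
          rw [hli] at hQ
          exact hvi hQ.2
        · obtain ⟨e1, e2⟩ := hceq0 l hQ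
          rw [mem_Ioo, e1, e2] at hl
          exact absurd (hl.1.trans hl.2) (lt_irrefl 0)
      rw [Set.indicator_of_notMem hnmem]
      rw [hv]
      rcases h01 (w i) (hwmem i hiK) with h | h
      · exact h
      · exact absurd h hvi

/-- Lemma 3.1: for a set `D` of switching controls satisfying
(D1) and (D2) and a local averaging projection `Π` to `ℝ^M`, the convex hull
`C_{D,Π} = conv (Π '' D)` is closed in `ℝ^M`. -/
theorem stmt_3
    (T : ℝ) (hT : 0 < T) (n : ℕ) (p : ℝ≥0∞) [Fact (1 ≤ p)] (hp : p ≠ ⊤)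
    (σ : ℝ) (hσ : 0 < σ)
    (D : Set (Lp (Fin n → ℝ) p (volume.restrict (Ioo (0:ℝ) T))))
    (hD1 : ∀ u ∈ D, ∃ v : ℝ → Fin n → ℝ,
      ((u : ℝ → Fin n → ℝ) =ᵐ[volume.restrict (Ioo (0:ℝ) T)] v) ∧
      (∀ t ∈ Ioo (0:ℝ) T, ∀ j, v t j = 0 ∨ v t j = 1) ∧
      (∑ j : Fin n, eVariationOn (fun s => v s j) (Ioo (0:ℝ) T)) ≤ ENNReal.ofReal σ)
    (hD2 : IsClosed D)
    (M : ℕ) (a b : Fin M → ℝ) (hab : ∀ i, a i < b i)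
    (hsub : ∀ i, Ioo (a i) (b i) ⊆ Ioo (0:ℝ) T)
    (j : Fin M → Fin n) :
    IsClosed (convexHull ℝ
      ((fun u : Lp (Fin n → ℝ) p (volume.restrict (Ioo (0:ℝ) T)) =>
          fun i : Fin M => (b i - a i)⁻¹ *
            ∫ t in Ioo (a i) (b i), (u : ℝ → Fin n → ℝ) t (j i)
              ∂(volume.restrict (Ioo (0:ℝ) T))) '' D)) := by
  classical
  haveI hfin : IsFiniteMeasure (volume.restrict (Ioo (0:ℝ) T)) := by
    constructor
    rw [Measure.restrict_apply_univ, Real.volume_Ioo]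
    exact ENNReal.ofReal_lt_top
  have hp0 : p ≠ 0 := (lt_of_lt_of_le zero_lt_one (Fact.out : 1 ≤ p)).ne'
  have hpr : 0 < p.toReal := ENNReal.toReal_pos hp0 hp
  set N : ℕ := ⌊σ⌋₊ + 1 with hN
  set Pset : Set (Fin n → Fin N → ℝ × ℝ) :=
    Set.univ.pi fun _ : Fin n => Set.univ.pi fun _ : Fin N =>
      Icc (0:ℝ) T ×ˢ Icc (0:ℝ) T with hPset
  have hPc : IsCompact Pset := isCompact_univ_pi fun _ =>
    isCompact_univ_pi fun _ => isCompact_Icc.prod isCompact_Icc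
  set G : (Fin n → Fin N → ℝ × ℝ) → ℝ → Fin n → ℝ := fun θ t j' =>
    Set.indicator (⋃ l, Ioo (θ j' l).1 (θ j' l).2) (fun _ => (1:ℝ)) t with hG
  have hGmeas : ∀ θ, Measurable (G θ) := by
    intro θ
    apply measurable_pi_lambda
    intro j'
    exact (measurable_const (a := (1:ℝ))).indicator
      (isOpen_iUnion fun l => isOpen_Ioo).measurableSet
  have hGbd : ∀ θ t, ‖G θ t‖ ≤ 1 := by
    intro θ t
    rw [pi_norm_le_iff_of_nonneg zero_le_one]
    intro j'
    show ‖Set.indicator (⋃ l, Ioo (θ j' l).1 (θ j' l).2) (fun _ => (1:ℝ)) t‖ ≤ 1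
    by_cases h : t ∈ ⋃ l, Ioo (θ j' l).1 (θ j' l).2
    · rw [Set.indicator_of_mem h]; norm_num
    · rw [Set.indicator_of_notMem h]; norm_num
  have hGmem : ∀ θ, MemLp (G θ) p (volume.restrict (Ioo (0:ℝ) T)) := fun θ =>
    MemLp.of_bound (hGmeas θ).aestronglyMeasurable 1 (Filter.Eventually.of_forall (hGbd θ))
  set F : (Fin n → Fin N → ℝ × ℝ) → Lp (Fin n → ℝ) p (volume.restrict (Ioo (0:ℝ) T)) :=
    fun θ => (hGmem θ).toLp (G θ) with hF
  -- continuity of F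
  have hFc : Continuous F := by
    rw [continuous_iff_seqContinuous]
    intro θs θ hθ
    have hθcoord : ∀ (j' : Fin n) (l : Fin N),
        Tendsto (fun k => (θs k j' l).1) atTop (𝓝 (θ j' l).1) ∧
        Tendsto (fun k => (θs k j' l).2) atTop (𝓝 (θ j' l).2) := by
      intro j' l
      have h1 : Tendsto (fun k => θs k j' l) atTop (𝓝 (θ j' l)) := by
        have := (tendsto_pi_nhds.1 hθ j')
        exact tendsto_pi_nhds.1 this l
      exact ⟨(continuous_fst.tendsto _).comp h1, (continuous_snd.tendsto _).comp h1⟩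
    have hae : ∀ᵐ t ∂(volume.restrict (Ioo (0:ℝ) T)), ∀ᶠ k in atTop, G (θs k) t = G θ t := by
      have hBad : (volume.restrict (Ioo (0:ℝ) T)) (⋃ (j' : Fin n) (l : Fin N), {(θ j' l).1, (θ j' l).2}) = 0 := by
        refine Set.Countable.measure_zero ?_ _
        exact Set.countable_iUnion fun j' => Set.countable_iUnion fun l =>
          (Set.countable_singleton _).insert _
      filter_upwards [compl_mem_ae_iff.mpr hBad] with t htB
      have ht : ∀ (j' : Fin n) (l : Fin N), t ≠ (θ j' l).1 ∧ t ≠ (θ j' l).2 := by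
        intro j' l
        constructor <;> intro h <;> exact htB (Set.mem_iUnion.2 ⟨j', Set.mem_iUnion.2
          ⟨l, by rw [h]; simp⟩⟩)
      have hcomp : ∀ j' : Fin n, ∀ᶠ k in atTop, G (θs k) t j' = G θ t j' := by
        intro j'
        by_cases hmem : t ∈ ⋃ l, Ioo (θ j' l).1 (θ j' l).2
        · obtain ⟨l, hl⟩ := Set.mem_iUnion.1 hmem
          have h1 : ∀ᶠ k in atTop, (θs k j' l).1 < t :=
            (hθcoord j' l).1.eventually_lt_const hl.1
          have h2 : ∀ᶠ k in atTop, t < (θs k j' l).2 :=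
            (hθcoord j' l).2.eventually_const_lt hl.2
          filter_upwards [h1, h2] with k hk1 hk2
          have hmem' : t ∈ ⋃ l', Ioo (θs k j' l').1 (θs k j' l').2 :=
            Set.mem_iUnion.2 ⟨l, hk1, hk2⟩
          show Set.indicator _ _ t = Set.indicator _ _ t
          rw [Set.indicator_of_mem hmem', Set.indicator_of_mem hmem]
        · have hl : ∀ l : Fin N, ∀ᶠ k in atTop,
              t ∉ Ioo (θs k j' l).1 (θs k j' l).2 := by
            intro l
            have hnot : t ∉ Ioo (θ j' l).1 (θ j' l).2 := fun hc =>
              hmem (Set.mem_iUnion.2 ⟨l, hc⟩)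
            rw [Set.mem_Ioo, not_and_or, not_lt, not_lt] at hnot
            rcases hnot with h' | h'
            · have hlt : t < (θ j' l).1 := lt_of_le_of_ne h' (ht j' l).1
              filter_upwards [(hθcoord j' l).1.eventually_const_lt hlt] with k hk
              exact fun hc => absurd hc.1 (not_lt.2 hk.le)
            · have hlt : (θ j' l).2 < t := lt_of_le_of_ne h' (Ne.symm (ht j' l).2)
              filter_upwards [(hθcoord j' l).2.eventually_lt_const hlt] with k hk
              exact fun hc => absurd hc.2 (not_lt.2 hk.le)
          have hall : ∀ᶠ k in atTop, ∀ l : Fin N,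
              t ∉ Ioo (θs k j' l).1 (θs k j' l).2 := eventually_all.2 hl
          filter_upwards [hall] with k hk
          have hmem' : t ∉ ⋃ l', Ioo (θs k j' l').1 (θs k j' l').2 := by
            intro hc
            obtain ⟨l', hl'⟩ := Set.mem_iUnion.1 hc
            exact hk l' hl'
          show Set.indicator _ _ t = Set.indicator _ _ t
          rw [Set.indicator_of_notMem hmem', Set.indicator_of_notMem hmem]
      have := eventually_all.2 hcomp
      filter_upwards [this] with k hk
      exact funext hk
    have htend : Tendsto (fun k => eLpNorm (G (θs k) - G θ) p (volume.restrict (Ioo (0:ℝ) T))) atTop (𝓝 0) := by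
      have heq : ∀ k, eLpNorm (G (θs k) - G θ) p (volume.restrict (Ioo (0:ℝ) T)) =
          (∫⁻ t, (‖(G (θs k) - G θ) t‖₊ : ℝ≥0∞) ^ p.toReal ∂(volume.restrict (Ioo (0:ℝ) T))) ^ (1 / p.toReal) :=
        fun k => eLpNorm_eq_lintegral_rpow_enorm_toReal hp0 hp
      simp only [heq]
      have hI : Tendsto (fun k => ∫⁻ t, (‖(G (θs k) - G θ) t‖₊ : ℝ≥0∞) ^ p.toReal ∂(volume.restrict (Ioo (0:ℝ) T)))
          atTop (𝓝 0) := by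
        have h0 : (0 : ℝ≥0∞) = ∫⁻ _, 0 ∂(volume.restrict (Ioo (0:ℝ) T)) := (lintegral_zero).symm
        rw [h0]
        apply tendsto_lintegral_of_dominated_convergence
          (bound := fun _ => (2:ℝ≥0∞) ^ p.toReal)
        · intro k
          exact (((((hGmeas (θs k)).sub (hGmeas θ)).nnnorm).coe_nnreal_ennreal).pow_const
            p.toReal)
        · intro k
          refine Filter.Eventually.of_forall fun t => ?_
          refine ENNReal.rpow_le_rpow ?_ hpr.le
          have hb : ‖(G (θs k) - G θ) t‖ ≤ 2 := by
            calc ‖(G (θs k) - G θ) t‖ = ‖G (θs k) t - G θ t‖ := rfl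
            _ ≤ ‖G (θs k) t‖ + ‖G θ t‖ := norm_sub_le _ _
            _ ≤ 1 + 1 := add_le_add (hGbd _ t) (hGbd _ t)
            _ = 2 := by norm_num
          have : (‖(G (θs k) - G θ) t‖₊ : ℝ≥0∞) ≤ ((2:ℝ≥0) : ℝ≥0∞) := by
            rw [ENNReal.coe_le_coe]
            exact_mod_cast hb
          simpa using this
        · rw [lintegral_const]
          exact ENNReal.mul_ne_top (ENNReal.rpow_lt_top_of_nonneg hpr.le (by norm_num)).ne
            (measure_ne_top (volume.restrict (Ioo (0:ℝ) T)) _)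
        · filter_upwards [hae] with t htk
          have : ∀ᶠ k in atTop,
              ((‖(G (θs k) - G θ) t‖₊ : ℝ≥0∞) ^ p.toReal) = 0 := by
            filter_upwards [htk] with k hk
            have : (G (θs k) - G θ) t = 0 := by
              show G (θs k) t - G θ t = 0
              rw [hk, sub_self]
            rw [this]
            simp [ENNReal.zero_rpow_of_pos hpr]
          refine Filter.Tendsto.congr' ?_ tendsto_const_nhds
          filter_upwards [this] with k hk
          exact hk.symm
      have hcont : Tendsto (fun x : ℝ≥0∞ => x ^ (1 / p.toReal)) (𝓝 0) (𝓝 0) := by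
        have := (ENNReal.continuous_rpow_const (y := 1 / p.toReal)).tendsto 0
        rwa [ENNReal.zero_rpow_of_pos (by positivity)] at this
      exact hcont.comp hI
    have hfinal := (Lp.tendsto_Lp_iff_tendsto_eLpNorm'' (fun k => G (θs k))
      (fun k => hGmem (θs k)) (G θ) (hGmem θ)).2 htend
    exact hfinal
  -- D is contained in F '' Pset
  have hDsub : D ⊆ F '' Pset := by
    intro u hu
    obtain ⟨v, hv_ae, hv01, hv_var⟩ := hD1 u hu
    have hvar_j : ∀ j' : Fin n,
        eVariationOn (fun s => v s j') (Ioo (0:ℝ) T) ≤ ENNReal.ofReal σ := by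
      intro j'
      refine le_trans ?_ hv_var
      exact Finset.single_le_sum
        (f := fun j'' : Fin n => eVariationOn (fun s => v s j'') (Ioo (0:ℝ) T))
        (fun _ _ => zero_le) (Finset.mem_univ j')
    choose cc dd hcd BB hBc hBprop using fun j' : Fin n =>
      aux_lemmaA hT hσ (fun s => v s j') (fun t ht => hv01 t ht j') (hvar_j j')
    refine ⟨fun j' l => (cc j' l, dd j' l), ?_, ?_⟩
    · rw [hPset]
      intro j' _
      intro l _
      exact ⟨(hcd j' l).1, (hcd j' l).2⟩
    · apply Lp.ext
      have h1 : (F (fun j' l => (cc j' l, dd j' l)) : ℝ → Fin n → ℝ)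
          =ᵐ[(volume.restrict (Ioo (0:ℝ) T))] G (fun j' l => (cc j' l, dd j' l)) := MemLp.coeFn_toLp _
      have hBnull : (volume.restrict (Ioo (0:ℝ) T)) (⋃ j', BB j') = 0 :=
        Set.Countable.measure_zero (Set.countable_iUnion fun j' => hBc j') _
      have h2 : G (fun j' l => (cc j' l, dd j' l)) =ᵐ[(volume.restrict (Ioo (0:ℝ) T))] v := by
        filter_upwards [ae_restrict_mem measurableSet_Ioo, compl_mem_ae_iff.mpr hBnull]
          with t ht htB
        funext j'
        have htB' : t ∉ BB j' := fun hc => htB (Set.mem_iUnion.2 ⟨j', hc⟩)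
        exact (hBprop j' t ht htB').symm
      exact h1.trans (h2.trans hv_ae.symm)
  have hDcomp : IsCompact D := (hPc.image hFc).of_isClosed_subset hD2 hDsub
  -- continuity of the projection
  have hPic : Continuous (fun u : Lp (Fin n → ℝ) p (volume.restrict (Ioo (0:ℝ) T)) =>
      fun i : Fin M => (b i - a i)⁻¹ *
        ∫ t in Ioo (a i) (b i), (u : ℝ → Fin n → ℝ) t (j i) ∂(volume.restrict (Ioo (0:ℝ) T))) := by
    apply continuous_pi
    intro i
    apply Continuous.mul continuous_const
    set s : Set ℝ := Ioo (a i) (b i) with hs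
    have hint : ∀ u : Lp (Fin n → ℝ) p (volume.restrict (Ioo (0:ℝ) T)),
        Integrable (fun t => (u : ℝ → Fin n → ℝ) t (j i)) ((volume.restrict (Ioo (0:ℝ) T)).restrict s) := by
      intro u
      have h1 : Integrable (u : ℝ → Fin n → ℝ) (volume.restrict (Ioo (0:ℝ) T)) := (Lp.memLp u).integrable Fact.out
      exact ((ContinuousLinearMap.proj (R := ℝ) (φ := fun _ : Fin n => ℝ)
        (j i)).integrable_comp h1).restrict
    set ψ : Lp (Fin n → ℝ) p (volume.restrict (Ioo (0:ℝ) T)) →ₗ[ℝ] ℝ :=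
      { toFun := fun u => ∫ t in s, (u : ℝ → Fin n → ℝ) t (j i) ∂(volume.restrict (Ioo (0:ℝ) T))
        map_add' := by
          intro u u'
          have hae' : (fun t => ((u + u' : Lp (Fin n → ℝ) p (volume.restrict (Ioo (0:ℝ) T))) : ℝ → Fin n → ℝ) t (j i))
              =ᵐ[(volume.restrict (Ioo (0:ℝ) T)).restrict s]
              fun t => (u : ℝ → Fin n → ℝ) t (j i) + (u' : ℝ → Fin n → ℝ) t (j i) := by
            filter_upwards [ae_restrict_of_ae (Lp.coeFn_add u u')] with t htt
            rw [htt]; rfl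
          rw [integral_congr_ae hae', integral_add (hint u) (hint u')]
        map_smul' := by
          intro r u
          have hae' : (fun t => ((r • u : Lp (Fin n → ℝ) p (volume.restrict (Ioo (0:ℝ) T))) : ℝ → Fin n → ℝ) t (j i))
              =ᵐ[(volume.restrict (Ioo (0:ℝ) T)).restrict s]
              fun t => r * (u : ℝ → Fin n → ℝ) t (j i) := by
            filter_upwards [ae_restrict_of_ae (Lp.coeFn_smul r u)] with t htt
            rw [htt]; rfl
          rw [integral_congr_ae hae', integral_const_mul]
          rfl } with hψ
    set C : ℝ := (((volume.restrict (Ioo (0:ℝ) T)) Set.univ) ^ (1 / (1:ℝ≥0∞).toReal - 1 / p.toReal)).toReal with hC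
    have hbound : ∀ u : Lp (Fin n → ℝ) p (volume.restrict (Ioo (0:ℝ) T)), ‖ψ u‖ ≤ C * ‖u‖ := by
      intro u
      have hintu : Integrable (u : ℝ → Fin n → ℝ) (volume.restrict (Ioo (0:ℝ) T)) := (Lp.memLp u).integrable Fact.out
      have step1 : ‖ψ u‖ ≤ ∫ t in s, ‖(u : ℝ → Fin n → ℝ) t (j i)‖ ∂(volume.restrict (Ioo (0:ℝ) T)) :=
        norm_integral_le_integral_norm _
      have step2 : ∫ t in s, ‖(u : ℝ → Fin n → ℝ) t (j i)‖ ∂(volume.restrict (Ioo (0:ℝ) T)) ≤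
          ∫ t in s, ‖(u : ℝ → Fin n → ℝ) t‖ ∂(volume.restrict (Ioo (0:ℝ) T)) := by
        refine integral_mono (hint u).norm hintu.restrict.norm ?_
        intro t
        exact norm_le_pi_norm _ (j i)
      have step3 : ∫ t in s, ‖(u : ℝ → Fin n → ℝ) t‖ ∂(volume.restrict (Ioo (0:ℝ) T)) ≤
          ∫ t, ‖(u : ℝ → Fin n → ℝ) t‖ ∂(volume.restrict (Ioo (0:ℝ) T)) :=
        setIntegral_le_integral hintu.norm (Filter.Eventually.of_forall fun t =>
          norm_nonneg _)
      have step4 : ∫ t, ‖(u : ℝ → Fin n → ℝ) t‖ ∂(volume.restrict (Ioo (0:ℝ) T)) = (eLpNorm (u : ℝ → Fin n → ℝ) 1 (volume.restrict (Ioo (0:ℝ) T))).toReal := by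
        rw [eLpNorm_one_eq_lintegral_enorm]
        rw [integral_norm_eq_lintegral_enorm (Lp.aestronglyMeasurable u)]
      have step5 : eLpNorm (u : ℝ → Fin n → ℝ) 1 (volume.restrict (Ioo (0:ℝ) T)) ≤
          eLpNorm (u : ℝ → Fin n → ℝ) p (volume.restrict (Ioo (0:ℝ) T)) *
            ((volume.restrict (Ioo (0:ℝ) T)) Set.univ) ^ (1 / (1:ℝ≥0∞).toReal - 1 / p.toReal) :=
        eLpNorm_le_eLpNorm_mul_rpow_measure_univ Fact.out (Lp.aestronglyMeasurable u)
      have hple : (1:ℝ) ≤ p.toReal := by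
        have := ENNReal.toReal_mono hp (Fact.out : 1 ≤ p)
        simpa using this
      have hexp : (0:ℝ) ≤ 1 / (1:ℝ≥0∞).toReal - 1 / p.toReal := by
        simp only [ENNReal.toReal_one]
        have h1 : 1 / p.toReal ≤ 1 := by
          rw [div_le_one hpr]
          exact hple
        linarith
      have hfin2 : eLpNorm (u : ℝ → Fin n → ℝ) p (volume.restrict (Ioo (0:ℝ) T)) *
          ((volume.restrict (Ioo (0:ℝ) T)) Set.univ) ^ (1 / (1:ℝ≥0∞).toReal - 1 / p.toReal) ≠ ⊤ :=
        ENNReal.mul_ne_top (Lp.eLpNorm_ne_top u)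
          (ENNReal.rpow_lt_top_of_nonneg hexp (measure_ne_top (volume.restrict (Ioo (0:ℝ) T)) _)).ne
      have step6 : (eLpNorm (u : ℝ → Fin n → ℝ) 1 (volume.restrict (Ioo (0:ℝ) T))).toReal ≤
          (eLpNorm (u : ℝ → Fin n → ℝ) p (volume.restrict (Ioo (0:ℝ) T)) *
            ((volume.restrict (Ioo (0:ℝ) T)) Set.univ) ^ (1 / (1:ℝ≥0∞).toReal - 1 / p.toReal)).toReal :=
        ENNReal.toReal_mono hfin2 step5
      have step7 : (eLpNorm (u : ℝ → Fin n → ℝ) p (volume.restrict (Ioo (0:ℝ) T)) *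
          ((volume.restrict (Ioo (0:ℝ) T)) Set.univ) ^ (1 / (1:ℝ≥0∞).toReal - 1 / p.toReal)).toReal = ‖u‖ * C := by
        rw [ENNReal.toReal_mul, ← hC, Lp.norm_def]
      rw [step7] at step6
      calc ‖ψ u‖ ≤ ∫ t in s, ‖(u : ℝ → Fin n → ℝ) t (j i)‖ ∂(volume.restrict (Ioo (0:ℝ) T)) := step1
        _ ≤ ∫ t in s, ‖(u : ℝ → Fin n → ℝ) t‖ ∂(volume.restrict (Ioo (0:ℝ) T)) := step2
        _ ≤ ∫ t, ‖(u : ℝ → Fin n → ℝ) t‖ ∂(volume.restrict (Ioo (0:ℝ) T)) := step3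
        _ = (eLpNorm (u : ℝ → Fin n → ℝ) 1 (volume.restrict (Ioo (0:ℝ) T))).toReal := step4
        _ ≤ ‖u‖ * C := step6
        _ = C * ‖u‖ := mul_comm _ _
    exact (ψ.mkContinuous C hbound).continuous
  have himg : IsCompact ((fun u : Lp (Fin n → ℝ) p (volume.restrict (Ioo (0:ℝ) T)) =>
      fun i : Fin M => (b i - a i)⁻¹ *
        ∫ t in Ioo (a i) (b i), (u : ℝ → Fin n → ℝ) t (j i) ∂(volume.restrict (Ioo (0:ℝ) T))) '' D) :=
    hDcomp.image hPic
  exact (aux_isCompact_convexHull himg).isClosed
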